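/- Let Ω be a finite set and let G ≤ Sym(Ω) be a transitive 2-closed permutation group of fixity 4 that contains a non-trivial normal p-subgroup for some prime p. Then G contains a fixed-point-free element. -/

import Mathlib

variable {Ω : Type*} [Fintype Ω]

/-- The number of fixed points of a permutation. -/
noncomputable def fixedCount (g : Equiv.Perm Ω) : ℕ := Nat.card {x : Ω // g x = x}

/-- `G` has fixity `f`: every non-trivial element fixes at most `f` points,
and some non-trivial element fixes exactly `f` points. -/
def HasFixity (G : Subgroup (Equiv.Perm Ω)) (f : ℕ) : Prop :=
  (∀ g ∈ G, g ≠ 1 → fixedCount g ≤ f) ∧ ∃ g ∈ G, g ≠ 1 ∧ fixedCount g = f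

/-- `G` is transitive on `Ω`. -/
def IsTransitive (G : Subgroup (Equiv.Perm Ω)) : Prop :=
  ∀ α β : Ω, ∃ g ∈ G, g α = β

/-- `G` is elusive: transitive, and it has no fixed-point-free element of prime order. -/
def IsElusive (G : Subgroup (Equiv.Perm Ω)) : Prop :=
  IsTransitive G ∧ ¬ ∃ g ∈ G, (orderOf g).Prime ∧ ∀ x : Ω, g x ≠ x

/-- `G` is 2-closed: any permutation `σ` of `Ω` such that `(σ α, σ β)` lies in the
`G`-orbit of `(α, β)` for all `α, β` belongs to `G`. -/
def IsTwoClosed (G : Subgroup (Equiv.Perm Ω)) : Prop :=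
  ∀ σ : Equiv.Perm Ω, (∀ α β : Ω, ∃ g ∈ G, g α = σ α ∧ g β = σ β) → σ ∈ G

namespace Stmt18Aux

open Equiv MulAction
open scoped Pointwise

set_option linter.unusedSectionVars false

variable (K : Subgroup (Equiv.Perm Ω))

/-- Stabilizer of a point in `K`. -/
def St (α : Ω) : Subgroup ↥K := stabilizer ↥K α

/-- Same-orbit relation for `K`. -/
def R (a b : Ω) : Prop := a ∈ orbit ↥K b

variable {K}

theorem smul_eq (k : ↥K) (a : Ω) : k • a = (k : Equiv.Perm Ω) a := rfl

theorem mem_St {k : ↥K} {α : Ω} : k ∈ St K α ↔ (k : Equiv.Perm Ω) α = α :=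
  Iff.rfl

theorem R.refl (a : Ω) : R K a a := mem_orbit_self a

theorem R_def {a b : Ω} : R K a b ↔ ∃ k : ↥K, (k : Equiv.Perm Ω) b = a := by
  constructor
  · rintro ⟨k, rfl⟩; exact ⟨k, rfl⟩
  · rintro ⟨k, rfl⟩; exact ⟨k, rfl⟩

theorem R.symm {a b : Ω} (h : R K a b) : R K b a := by
  obtain ⟨k, hk⟩ := R_def.mp h
  exact R_def.mpr ⟨k⁻¹, by simp [← hk]⟩

theorem R.trans {a b c : Ω} (h : R K a b) (h' : R K b c) : R K a c := by
  obtain ⟨k, hk⟩ := R_def.mp h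
  obtain ⟨m, hm⟩ := R_def.mp h'
  exact R_def.mpr ⟨k * m, by simp [← hk, ← hm]⟩

theorem buildSigma (G K : Subgroup (Equiv.Perm Ω)) (hKG : K ≤ G)
    (hcomm : ∀ a ∈ K, ∀ b ∈ K, a * b = b * a)
    (h2c : IsTwoClosed G)
    (hno : ∀ g ∈ G, ∃ x : Ω, g x = x)
    (hStR : ∀ α β : Ω, R K α β → St K α = St K β)
    (hnt : ∀ α : Ω, St K α ≠ ⊤)
    (hJ : ∀ α β : Ω, St K α ≠ St K β → St K α ⊔ St K β = ⊤) : False := by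
  classical
  have hex : ∀ H : Subgroup ↥K, ∃ u : ↥K, (H ≠ ⊤ → u ∉ H) := by
    intro H
    by_cases h : H = ⊤
    · exact ⟨1, fun hc => absurd h hc⟩
    · have : ∃ u : ↥K, u ∉ H := by
        by_contra hh
        push_neg at hh
        exact h (Subgroup.eq_top_iff' H |>.mpr hh)
      obtain ⟨u, hu⟩ := this
      exact ⟨u, fun _ => hu⟩
  choose F hF using hex
  set x : Ω → ↥K := fun α => F (St K α) with hxdef
  have hx1 : ∀ α, x α ∉ St K α := fun α => hF (St K α) (hnt α)
  have hxc : ∀ α β, St K α = St K β → x α = x β := by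
    intro α β h
    simp only [hxdef, h]
  have hinj : Function.Injective (fun α => ((x α : Equiv.Perm Ω)) α) := by
    intro a b hab
    simp only at hab
    by_cases hr : R K a b
    · have hx := hxc a b (hStR a b hr)
      rw [hx] at hab
      exact (x b : Equiv.Perm Ω).injective hab
    · exfalso
      have h1 : R K ((x a : Equiv.Perm Ω) a) a := R_def.mpr ⟨x a, rfl⟩
      have h2 : R K ((x b : Equiv.Perm Ω) b) b := R_def.mpr ⟨x b, rfl⟩
      rw [hab] at h1
      exact hr (h1.symm.trans h2)
  set σ : Equiv.Perm Ω :=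
    Equiv.ofBijective _ (Finite.injective_iff_bijective.mp hinj) with hσdef
  have hσ : ∀ α, σ α = (x α : Equiv.Perm Ω) α := fun _ => rfl
  have hσG : σ ∈ G := by
    apply h2c
    intro a b
    by_cases hs : St K a = St K b
    · refine ⟨↑(x a), hKG (x a).2, rfl, ?_⟩
      rw [hσ, hxc a b hs]
    · have hJt := hJ a b hs
      have hNormal : (St K b).Normal := by
        constructor
        intro n hn g
        have : g * n * g⁻¹ = n := by
          have hc : g * n = n * g := Subtype.ext (hcomm ↑g g.2 ↑n n.2)
          rw [hc, mul_inv_cancel_right]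
        rwa [this]
      have hmem : (x a)⁻¹ * (x b) ∈ St K a ⊔ St K b := by
        rw [hJt]; exact Subgroup.mem_top _
      have hmem2 : ((x a)⁻¹ * (x b)) ∈ ((St K a : Set ↥K) * (St K b : Set ↥K)) := by
        rw [← Subgroup.mul_normal]
        exact_mod_cast hmem
      obtain ⟨u, hu, w, hw, huw⟩ := hmem2
      simp only at huw
      have key : x a * u = x b * w⁻¹ := by
        have : x a * (u * w) = x b := by rw [huw, mul_inv_cancel_left]
        rw [← this]
        group
      refine ⟨↑(x a * u), hKG (x a * u).2, ?_, ?_⟩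
      · show ((x a : Equiv.Perm Ω) * (u : Equiv.Perm Ω)) a = σ a
        have hua : (u : Equiv.Perm Ω) a = a := hu
        rw [hσ]
        simp [Equiv.Perm.mul_apply, hua]
      · show ((x a * u : ↥K) : Equiv.Perm Ω) b = σ b
        rw [key, hσ]
        have hwb : ((w⁻¹ : ↥K) : Equiv.Perm Ω) b = b := inv_mem hw
        show ((x b : Equiv.Perm Ω) * ((w⁻¹ : ↥K) : Equiv.Perm Ω)) b = _
        simp only [Equiv.Perm.mul_apply, hwb]
  obtain ⟨y, hy⟩ := hno σ hσG
  exact hx1 y (mem_St.mpr (by rw [← hσ y]; exact hy))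

theorem main (G K : Subgroup (Equiv.Perm Ω))
    (hKG : K ≤ G)
    (hcomm : ∀ a ∈ K, ∀ b ∈ K, a * b = b * a)
    (hnorm : ∀ g ∈ G, ∀ k ∈ K, g * k * g⁻¹ ∈ K)
    (hKnt : ∃ k ∈ K, k ≠ 1)
    (htr : IsTransitive G) (h2c : IsTwoClosed G) (hfix : HasFixity G 4)
    (hno : ∀ g ∈ G, ∃ x : Ω, g x = x) : False := by
  classical
  obtain ⟨k₀, hk₀K, hk₀1⟩ := hKnt
  set k0 : ↥K := ⟨k₀, hk₀K⟩ with hk0def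
  have hk0ne : k0 ≠ 1 := fun h => hk₀1 (congrArg Subtype.val h)
  obtain ⟨α₀, hα₀⟩ : ∃ α : Ω, k₀ α ≠ α := by
    by_contra h; push_neg at h; exact hk₀1 (Equiv.ext h)
  -- elements of a stabilizer fix the whole orbit
  have stfix : ∀ (α : Ω) (u : ↥K), u ∈ St K α → ∀ β, R K β α → (u : Equiv.Perm Ω) β = β := by
    rintro α u hu β hβ
    obtain ⟨m, rfl⟩ := R_def.mp hβ
    have hmul : (u : Equiv.Perm Ω) * (m : Equiv.Perm Ω) = (m : Equiv.Perm Ω) * (u : Equiv.Perm Ω) :=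
      hcomm _ u.2 _ m.2
    have hfixα : (u : Equiv.Perm Ω) α = α := hu
    calc (u : Equiv.Perm Ω) ((m : Equiv.Perm Ω) α)
        = ((u : Equiv.Perm Ω) * (m : Equiv.Perm Ω)) α := rfl
      _ = ((m : Equiv.Perm Ω) * (u : Equiv.Perm Ω)) α := by rw [hmul]
      _ = (m : Equiv.Perm Ω) α := by
          show (m : Equiv.Perm Ω) ((u : Equiv.Perm Ω) α) = _
          rw [hfixα]
  -- stabilizers are constant on orbits
  have hStR : ∀ α β : Ω, R K α β → St K α = St K β := by
    intro α β h
    ext u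
    constructor
    · intro hu
      exact mem_St.mpr (stfix α u hu β h.symm)
    · intro hu
      exact mem_St.mpr (stfix β u hu α h)
  -- stabilizer cardinality is constant
  have stConj : ∀ g, (hg : g ∈ G) → ∀ α : Ω, Nat.card (St K (g α)) = Nat.card (St K α) := by
    intro g hg α
    have hginv : g⁻¹ ∈ G := inv_mem hg
    refine Nat.card_eq_of_bijective (fun u => ⟨⟨g⁻¹ * ↑↑u * g, by
        simpa using hnorm g⁻¹ hginv ↑↑u (u : ↥K).2⟩, ?_⟩) ⟨?_, ?_⟩
    · show (g⁻¹ * ((u : ↥K) : Equiv.Perm Ω) * g) α = α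
      have := mem_St.mp u.2
      simp [Equiv.Perm.mul_apply, this]
    · intro u v huv
      have h1 : g⁻¹ * ((u : ↥K) : Equiv.Perm Ω) * g = g⁻¹ * ((v : ↥K) : Equiv.Perm Ω) * g :=
        congrArg (fun z : ↥(St K α) => ((z : ↥K) : Equiv.Perm Ω)) huv
      have h2 : ((u : ↥K) : Equiv.Perm Ω) = ((v : ↥K) : Equiv.Perm Ω) := by
        have := congrArg (fun z => g * z * g⁻¹) h1
        simpa [mul_assoc] using this
      exact Subtype.ext (Subtype.ext h2)
    · intro w
      refine ⟨⟨⟨g * ↑↑w * g⁻¹, hnorm g hg ↑↑w (w : ↥K).2⟩, ?_⟩, ?_⟩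
      · show (g * ((w : ↥K) : Equiv.Perm Ω) * g⁻¹) (g α) = g α
        have := mem_St.mp w.2
        simp [Equiv.Perm.mul_apply, this]
      · apply Subtype.ext; apply Subtype.ext
        show g⁻¹ * (g * ↑↑w * g⁻¹) * g = ((w : ↥K) : Equiv.Perm Ω)
        simp [mul_assoc]
  have card_St_all : ∀ α β : Ω, Nat.card (St K α) = Nat.card (St K β) := by
    intro α β
    obtain ⟨g, hg, hgab⟩ := htr α β
    rw [← hgab]
    exact (stConj g hg α).symm
  -- orbit-stabilizer
  have orbstab : ∀ α : Ω, Nat.card (orbit ↥K α) * Nat.card (St K α) = Nat.card ↥K := by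
    intro α
    letI := Fintype.ofFinite ↥K
    letI := Fintype.ofFinite ↥(orbit ↥K α)
    letI := Fintype.ofFinite ↥(stabilizer ↥K α)
    have := card_orbit_mul_card_stabilizer_eq_card_group ↥K α
    simp only [St, Nat.card_eq_fintype_card]
    convert this using 2 <;> exact Subsingleton.elim _ _
  set hh : ℕ := Nat.card (St K α₀) with hhdef
  set s : ℕ := Nat.card (orbit ↥K α₀) with hsdef
  set nK : ℕ := Nat.card ↥K with hnKdef
  have hhpos : 0 < hh := Nat.card_pos
  have hStcard : ∀ α : Ω, Nat.card (St K α) = hh := fun α => card_St_all α α₀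
  have card_orb_all : ∀ α : Ω, Nat.card (orbit ↥K α) = s := by
    intro α
    have h1 := orbstab α
    have h2 := orbstab α₀
    rw [hStcard α] at h1
    rw [← hhdef] at h2
    have : Nat.card (orbit ↥K α) * hh = s * hh := by rw [h1, h2]
    exact Nat.eq_of_mul_eq_mul_right hhpos this
  have hnKsh : nK = s * hh := (orbstab α₀).symm
  -- s ≥ 2
  have hs2 : 2 ≤ s := by
    have hne : (⟨α₀, R.refl α₀⟩ : ↥(orbit ↥K α₀)) ≠ ⟨k₀ α₀, R_def.mpr ⟨k0, rfl⟩⟩ := by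
      intro h
      exact hα₀ (congrArg Subtype.val h).symm
    have : Nontrivial ↥(orbit ↥K α₀) := ⟨_, _, hne⟩
    exact Finite.one_lt_card_iff_nontrivial.mpr this
  -- fixed-point counting
  have hfixval : ∀ u : ↥K, (u : Equiv.Perm Ω) ≠ 1 →
      ∀ A : Set Ω, (∀ y ∈ A, (u : Equiv.Perm Ω) y = y) → Nat.card A ≤ 4 := by
    intro u hu A hA
    have h1 : fixedCount (u : Equiv.Perm Ω) ≤ 4 := hfix.1 _ (hKG u.2) hu
    refine le_trans ?_ h1
    exact Nat.card_le_card_of_injective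
      (fun y => ⟨y.1, hA y.1 y.2⟩)
      (fun y z hyz => Subtype.ext (by simpa using congrArg Subtype.val hyz))
  -- h = 1 impossible
  have hh2 : 2 ≤ hh := by
    by_contra hlt
    push_neg at hlt
    have hh1 : hh = 1 := by omega
    obtain ⟨y, hy⟩ := hno k₀ (hKG hk₀K)
    have hmem : k0 ∈ St K y := mem_St.mpr hy
    have hbot : St K y = ⊥ := Subgroup.card_eq_one.mp (by rw [hStcard y, hh1])
    rw [hbot, Subgroup.mem_bot] at hmem
    exact hk0ne hmem
  -- each stabilizer has a nontrivial element
  have hntst : ∀ α : Ω, ∃ u : ↥K, u ∈ St K α ∧ u ≠ 1 := by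
    intro α
    have : Nontrivial ↥(St K α) := by
      apply Finite.one_lt_card_iff_nontrivial.mp
      rw [hStcard α]; omega
    obtain ⟨u, hu⟩ := exists_ne (1 : ↥(St K α))
    exact ⟨↑u, u.2, fun h => hu (Subtype.ext h)⟩
  have hcoene : ∀ u : ↥K, u ≠ 1 → (u : Equiv.Perm Ω) ≠ 1 := by
    intro u hu h
    exact hu (Subtype.ext h)
  -- s ≤ 4
  have hs4 : s ≤ 4 := by
    obtain ⟨u, huSt, hune⟩ := hntst α₀
    have := hfixval u (hcoene u hune) (orbit ↥K α₀) (fun y hy => stfix α₀ u huSt y hy)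
    rw [← hsdef] at this
    exact this
  -- distinct stabilizers ⇒ disjoint orbits
  have stne : ∀ a b : Ω, St K a ≠ St K b → ¬ R K a b := fun a b h hr => h (hStR a b hr)
  have Rdisj : ∀ a b : Ω, ¬ R K a b → Disjoint (orbit ↥K a) (orbit ↥K b) := by
    intro a b h
    rw [Set.disjoint_left]
    intro y hya hyb
    exact h ((R.symm hya).trans hyb)
  -- pair bound: a common nontrivial stabilizer element of two orbits forces 2s ≤ 4
  have pairbound : ∀ a b : Ω, ¬ R K a b → ∀ u : ↥K, u ∈ St K a → u ∈ St K b → u ≠ 1 →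
      2 * s ≤ 4 := by
    intro a b hab u hua hub hune
    have hABfix : ∀ y ∈ (orbit ↥K a ∪ orbit ↥K b : Set Ω), (u : Equiv.Perm Ω) y = y := by
      rintro y (hy | hy)
      · exact stfix a u hua y hy
      · exact stfix b u hub y hy
    have hfixAB := hfixval u (hcoene u hune) _ hABfix
    have hcard : Nat.card ↥(orbit ↥K a ∪ orbit ↥K b : Set Ω) = 2 * s := by
      rw [Nat.card_coe_set_eq, Set.ncard_union_eq (Rdisj a b hab) (Set.toFinite _) (Set.toFinite _)]
      have h1 : (orbit ↥K a).ncard = s := by rw [← Nat.card_coe_set_eq, card_orb_all]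
      have h2 : (orbit ↥K b).ncard = s := by rw [← Nat.card_coe_set_eq, card_orb_all]
      omega
    omega
  -- no stabilizer is everything
  have hnt : ∀ α : Ω, St K α ≠ ⊤ := by
    intro α htop
    have hall : ∀ y : ↥(orbit ↥K α), (y : Ω) = α := by
      rintro ⟨y, m, rfl⟩
      have hm : m ∈ St K α := htop ▸ Subgroup.mem_top m
      exact mem_St.mp hm
    have hnontriv : Nontrivial ↥(orbit ↥K α) :=
      Finite.one_lt_card_iff_nontrivial.mp (by rw [card_orb_all α]; omega)
    obtain ⟨y, z, hyz⟩ := hnontriv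
    exact hyz (Subtype.ext ((hall y).trans (hall z).symm))
  -- prime orbit size: distinct stabilizers generate
  have hJprime : Nat.Prime s → ∀ a b : Ω, St K a ≠ St K b → St K a ⊔ St K b = ⊤ := by
    intro hq a b hne
    have h1 : Nat.card (St K a) ∣ Nat.card ↥(St K a ⊔ St K b) :=
      Subgroup.card_dvd_of_le le_sup_left
    have h2 : Nat.card ↥(St K a ⊔ St K b) ∣ nK := Subgroup.card_subgroup_dvd_card _
    obtain ⟨m, hm⟩ := h1
    rw [hStcard a] at hm
    have hmdvd : m ∣ s := by
      rw [hm, hnKsh, mul_comm s hh] at h2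
      exact (Nat.mul_dvd_mul_iff_left (by omega : 0 < hh)).mp h2
    rcases hq.eq_one_or_self_of_dvd m hmdvd with hm1 | hms
    · exfalso
      have hSta_eq : St K a = St K a ⊔ St K b :=
        Subgroup.eq_of_le_of_card_ge le_sup_left (by rw [hm, hm1, mul_one, hStcard a])
      have hle : St K b ≤ St K a := hSta_eq ▸ le_sup_right
      have : St K b = St K a :=
        Subgroup.eq_of_le_of_card_ge hle (by rw [hStcard a, hStcard b])
      exact hne this.symm
    · apply Subgroup.eq_top_of_card_eq
      rw [hm, hms, ← hnKdef, hnKsh, mul_comm s hh]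
  -- trivial pairwise intersections when 2s > 4
  have hinfTriv : 4 < 2 * s → ∀ a b : Ω, St K a ≠ St K b → St K a ⊓ St K b = ⊥ := by
    intro hsbig a b hne
    by_contra hbot
    have hnt' : Nontrivial ↥(St K a ⊓ St K b) := (Subgroup.nontrivial_iff_ne_bot _).mpr hbot
    obtain ⟨u, hu⟩ := exists_ne (1 : ↥(St K a ⊓ St K b))
    have hune : (↑u : ↥K) ≠ 1 := fun h => hu (Subtype.ext h)
    have := pairbound a b (stne a b hne) ↑u u.2.1 u.2.2 hune
    omega
  -- product bound
  have hprodcard : ∀ a b : Ω, St K a ⊓ St K b = ⊥ →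
      Nat.card (St K a) * Nat.card (St K b) ≤ Nat.card ↥(St K a ⊔ St K b) := by
    intro a b hbot
    have hinj : Function.Injective (fun p : ↥(St K a) × ↥(St K b) =>
        (⟨↑p.1 * ↑p.2, Subgroup.mul_mem _ (Subgroup.mem_sup_left p.1.2)
          (Subgroup.mem_sup_right p.2.2)⟩ : ↥(St K a ⊔ St K b))) := by
      rintro ⟨p1, p2⟩ ⟨q1, q2⟩ hpq
      have hval : (↑p1 : ↥K) * ↑p2 = ↑q1 * ↑q2 := congrArg Subtype.val hpq
      have hz : (↑q1 : ↥K)⁻¹ * ↑p1 = ↑q2 * (↑p2 : ↥K)⁻¹ := by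
        have h := eq_mul_inv_iff_mul_eq.mpr hval
        rw [h]
        group
      have hz1 : (↑q1 : ↥K)⁻¹ * ↑p1 ∈ St K a ⊓ St K b := by
        constructor
        · exact Subgroup.mul_mem _ (Subgroup.inv_mem _ q1.2) p1.2
        · rw [hz]; exact Subgroup.mul_mem _ q2.2 (Subgroup.inv_mem _ p2.2)
      rw [hbot, Subgroup.mem_bot] at hz1
      have hp1q1 : p1 = q1 := by
        have : (↑p1 : ↥K) = ↑q1 := by
          have := congrArg (fun z => (↑q1 : ↥K) * z) hz1
          simpa [mul_assoc] using this
        exact Subtype.ext this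
      have hp2q2 : p2 = q2 := by
        have h2 : (↑q2 : ↥K) * (↑p2 : ↥K)⁻¹ = 1 := by rw [← hz, hz1]
        have h3 : (↑q2 : ↥K) = ↑p2 := by
          have := congrArg (fun z => z * (↑p2 : ↥K)) h2
          simpa [mul_assoc] using this
        exact (Subtype.ext h3).symm
      rw [hp1q1, hp2q2]
    have := Nat.card_le_card_of_injective _ hinj
    rwa [Nat.card_prod] at this
  -- case split on s
  have hscases : s = 2 ∨ s = 3 ∨ s = 4 := by omega
  rcases hscases with hs | hs | hs
  · exact buildSigma G K hKG hcomm h2c hno hStR hnt (hJprime (by rw [hs]; norm_num))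
  · exact buildSigma G K hKG hcomm h2c hno hStR hnt (hJprime (by rw [hs]; norm_num))
  · -- s = 4
    have hnK4 : nK = 4 * hh := by rw [hnKsh, hs]
    have hdistinct : ∃ b : Ω, St K b ≠ St K α₀ := by
      by_contra hall
      push_neg at hall
      obtain ⟨u, huSt, hune⟩ := hntst α₀
      have hu1 : (u : Equiv.Perm Ω) = 1 := by
        apply Equiv.ext
        intro y
        have : u ∈ St K y := (hall y) ▸ huSt
        simpa using mem_St.mp this
      exact hcoene u hune hu1
    obtain ⟨β₀, hβ₀⟩ := hdistinct
    have hinf := hinfTriv (by omega) β₀ α₀ hβ₀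
    have hb := hprodcard β₀ α₀ hinf
    have hsuple : Nat.card ↥(St K β₀ ⊔ St K α₀) ≤ nK :=
      Nat.le_of_dvd (by omega) (Subgroup.card_subgroup_dvd_card _)
    rw [hStcard β₀, hStcard α₀] at hb
    have hmulle : hh * hh ≤ 4 * hh := by omega
    have hhle4 : hh ≤ 4 := Nat.le_of_mul_le_mul_right hmulle (by omega)
    have hhcases : hh = 2 ∨ hh = 3 ∨ hh = 4 := by omega
    rcases hhcases with hhv | hhv | hhv
    · -- h = 2 : |K| = 8, seven orbits of size 4, |Ω| = 28, an element of order 7 must act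
      -- without fixed points
      letI := Fintype.ofFinite ↥K
      have hnK8 : nK = 8 := by rw [hnK4, hhv]
      have huniq : ∀ α : Ω, ∀ u w : ↥K, u ∈ St K α → u ≠ 1 → w ∈ St K α → w ≠ 1 → u = w := by
        intro α u w hu hune hw hwne
        have hcard2 : Nat.card ↥(St K α) = 2 := by rw [hStcard α, hhv]
        obtain ⟨y, hy⟩ := (Nat.card_eq_two_iff' (1 : ↥(St K α))).mp hcard2
        have h1 : (⟨u, hu⟩ : ↥(St K α)) = y := hy.2 _ (fun h => hune (congrArg Subtype.val h))
        have h2 : (⟨w, hw⟩ : ↥(St K α)) = y := hy.2 _ (fun h => hwne (congrArg Subtype.val h))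
        exact congrArg Subtype.val (h1.trans h2.symm)
      choose ψ hψmem hψne using hntst
      have hfib : ∀ v : ↥K, v ≠ 1 → ∀ α : Ω, (ψ α = v ↔ (v : Equiv.Perm Ω) α = α) := by
        intro v hv α
        constructor
        · intro h; rw [← h]; exact mem_St.mp (hψmem α)
        · intro h
          exact (huniq α v (ψ α) (mem_St.mpr h) hv (hψmem α) (hψne α)).symm
      have hfixev : ∀ v : ↥K, v ≠ 1 → Nat.card {y : Ω | (v : Equiv.Perm Ω) y = y} = 4 := by
        intro v hv
        have hle : Nat.card {y : Ω | (v : Equiv.Perm Ω) y = y} ≤ 4 :=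
          hfixval v (hcoene v hv) _ (fun y hy => hy)
        obtain ⟨z, hz⟩ := hno ↑v (hKG v.2)
        have hvz : v ∈ St K z := mem_St.mpr hz
        have hsub : orbit ↥K z ⊆ {y : Ω | (v : Equiv.Perm Ω) y = y} :=
          fun y hy => stfix z v hvz y hy
        have hge : Nat.card ↥(orbit ↥K z) ≤ Nat.card {y : Ω | (v : Equiv.Perm Ω) y = y} :=
          Nat.card_le_card_of_injective (Set.inclusion hsub) (Set.inclusion_injective hsub)
        rw [card_orb_all z, hs] at hge
        omega
      have hcardfilter : ∀ p : Ω → Prop,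
          (Finset.univ.filter (fun α => p α)).card = Nat.card {y : Ω | p y} := by
        intro p
        rw [Nat.card_coe_set_eq, Set.ncard_eq_toFinset_card', Set.toFinset_setOf]
      have hΩ28 : Fintype.card Ω = 28 := by
        have hmaps : ∀ α : Ω, α ∈ Finset.univ → ψ α ∈ (Finset.univ.erase (1 : ↥K)) :=
          fun α _ => Finset.mem_erase.mpr ⟨hψne α, Finset.mem_univ _⟩
        have hsum := Finset.card_eq_sum_card_fiberwise hmaps
        rw [Finset.card_univ] at hsum
        have heach : ∀ v ∈ Finset.univ.erase (1 : ↥K),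
            (Finset.univ.filter (fun α => ψ α = v)).card = 4 := by
          intro v hvmem
          have hv : v ≠ 1 := (Finset.mem_erase.mp hvmem).1
          have hfe : (Finset.univ.filter (fun α => ψ α = v))
              = (Finset.univ.filter (fun α => (v : Equiv.Perm Ω) α = α)) := by
            apply Finset.filter_congr
            intro α _
            exact hfib v hv α
          rw [hfe, hcardfilter, hfixev v hv]
        have h7card : (Finset.univ.erase (1 : ↥K)).card = 7 := by
          rw [Finset.card_erase_of_mem (Finset.mem_univ _), Finset.card_univ,
            ← Nat.card_eq_fintype_card, ← hnKdef, hnK8]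
        calc Fintype.card Ω = ∑ v ∈ (Finset.univ.erase (1 : ↥K)),
              (Finset.univ.filter (fun α => ψ α = v)).card := hsum
          _ = (Finset.univ.erase (1 : ↥K)).card * 4 := Finset.sum_const_nat heach
          _ = 28 := by rw [h7card]
      -- 7 divides the order of G, so G has an element of order 7
      letI := Fintype.ofFinite ↥G
      have horbG : orbit ↥G α₀ = Set.univ := by
        ext β
        simp only [Set.mem_univ, iff_true]
        obtain ⟨g, hg, hgab⟩ := htr α₀ β
        exact ⟨⟨g, hg⟩, hgab⟩
      have hdvd7 : 7 ∣ Fintype.card ↥G := by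
        letI := Fintype.ofFinite ↥(orbit ↥G α₀)
        letI := Fintype.ofFinite ↥(stabilizer ↥G α₀)
        have hos := card_orbit_mul_card_stabilizer_eq_card_group ↥G α₀
        have hcorb : Fintype.card ↥(orbit ↥G α₀) = Fintype.card Ω :=
          Fintype.card_congr ((Equiv.setCongr horbG).trans (Equiv.Set.univ Ω))
        refine dvd_trans (by norm_num : (7:ℕ) ∣ 28) ⟨Fintype.card ↥(stabilizer ↥G α₀), ?_⟩
        rw [← hos, hcorb, hΩ28]
      haveI : Fact (Nat.Prime 7) := ⟨by norm_num⟩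
      obtain ⟨gg, hgg⟩ := exists_prime_orderOf_dvd_card 7 hdvd7
      set g' : Equiv.Perm Ω := ↑gg with hg'def
      have hg'G : g' ∈ G := gg.2
      have horder : orderOf g' = 7 := by rw [hg'def, Subgroup.orderOf_coe, hgg]
      have hg'ne : g' ≠ 1 := by intro h; rw [h, orderOf_one] at horder; norm_num at horder
      have h7 : g' ^ 7 = 1 := by rw [← horder]; exact pow_orderOf_eq_one g'
      have Rcompat : ∀ g : Equiv.Perm Ω, g ∈ G → ∀ a b : Ω, R K a b → R K (g a) (g b) := by
        intro g hg a b hab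
        obtain ⟨m, hm⟩ := R_def.mp hab
        refine R_def.mpr ⟨⟨g * ↑m * g⁻¹, hnorm g hg ↑m m.2⟩, ?_⟩
        show (g * (↑m : Equiv.Perm Ω) * g⁻¹) (g b) = g a
        simp [Equiv.Perm.mul_apply, ← hm]
      have Lfix : ∀ c : Ω, R K (g' c) c → ∀ β : Ω, R K β c → g' β = β := by
        intro c hc β hβ
        have horbn : ∀ n : ℕ, R K ((g' ^ n) β) c := by
          intro n
          induction n with
          | zero => simpa using hβ
          | succ n ih =>
            have h1 : R K (g' ((g' ^ n) β)) (g' c) := Rcompat g' hg'G _ _ ih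
            have h2 : R K (g' ((g' ^ n) β)) c := h1.trans hc
            have heq : (g' ^ (n+1)) β = g' ((g' ^ n) β) := by
              rw [pow_succ']
              rfl
            rwa [heq]
        have hper : Function.IsPeriodicPt (⇑g') 7 β := by
          show (⇑g')^[7] β = β
          rw [Equiv.Perm.iterate_eq_pow, h7]
          rfl
        have hdvd := hper.minimalPeriod_dvd
        rcases (by norm_num : Nat.Prime 7).eq_one_or_self_of_dvd _ hdvd with h1 | h77
        · exact Function.minimalPeriod_eq_one_iff_isFixedPt.mp h1
        · exfalso
          have hdist : ∀ i j : ℕ, i < j → j < 7 → (g' ^ i) β ≠ (g' ^ j) β := by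
            intro i j hij hj7 heq
            have hji : (g' ^ (j - i)) β = β := by
              have hsp : (g' ^ j) β = (g' ^ i) ((g' ^ (j-i)) β) := by
                rw [← Equiv.Perm.mul_apply, ← pow_add]
                congr 2
                omega
              rw [← heq] at hsp
              exact ((g' ^ i).injective hsp).symm
            have hper' : Function.IsPeriodicPt (⇑g') (j - i) β := by
              show (⇑g')^[j-i] β = β
              rw [Equiv.Perm.iterate_eq_pow]; exact hji
            have hle := hper'.minimalPeriod_le (by omega)
            omega
          have hsub7 : (Finset.range 7).image (fun i => (g' ^ i) β) ⊆ (orbit ↥K c).toFinset := by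
            intro y hy
            obtain ⟨i, hi, rfl⟩ := Finset.mem_image.mp hy
            exact Set.mem_toFinset.mpr (horbn i)
          have hcard7 : ((Finset.range 7).image (fun i => (g' ^ i) β)).card = 7 := by
            rw [Finset.card_image_of_injOn, Finset.card_range]
            intro i hi j hj hij
            rcases Nat.lt_trichotomy i j with h | h | h
            · exact absurd hij (hdist i j h (Finset.mem_range.mp hj))
            · exact h
            · exact absurd hij.symm (hdist j i h (Finset.mem_range.mp hi))
          have hcardorb : (orbit ↥K c).toFinset.card = 4 := by
            rw [← Set.ncard_eq_toFinset_card', ← Nat.card_coe_set_eq, card_orb_all c, hs]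
          have := Finset.card_le_card hsub7
          omega
      obtain ⟨α₁, hα₁⟩ := hno g' hg'G
      have hRα₁ : R K (g' α₁) α₁ := by rw [hα₁]; exact R.refl α₁
      have hγex : ∃ γ : Ω, ¬ R K γ α₁ := by
        by_contra hallin
        push_neg at hallin
        have hinj2 : Function.Injective (fun y : Ω => (⟨y, hallin y⟩ : ↥(orbit ↥K α₁))) :=
          fun y z hyz => congrArg Subtype.val hyz
        have hle := Nat.card_le_card_of_injective _ hinj2
        rw [card_orb_all α₁, hs] at hle
        have h28 : Nat.card Ω = 28 := by rw [Nat.card_eq_fintype_card, hΩ28]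
        omega
      obtain ⟨γ, hγ₁⟩ := hγex
      by_cases hrg : R K (g' γ) γ
      · -- g' would fix at least 5 points
        have hfixγ := Lfix γ hrg
        have hA : ∀ y ∈ insert α₁ (orbit ↥K γ), g' y = y := by
          intro y hy
          rcases Set.mem_insert_iff.mp hy with rfl | hy'
          · exact hα₁
          · exact hfixγ y hy'
        have hcardA : Nat.card ↥(insert α₁ (orbit ↥K γ) : Set Ω) = 5 := by
          rw [Nat.card_coe_set_eq,
            Set.ncard_insert_of_notMem (fun hmem => hγ₁ (R.symm hmem)) (Set.toFinite _),
            ← Nat.card_coe_set_eq, card_orb_all γ, hs]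
        have hle4 : fixedCount g' ≤ 4 := hfix.1 g' hg'G hg'ne
        have hge5 : 5 ≤ fixedCount g' := by
          rw [← hcardA]
          exact Nat.card_le_card_of_injective (fun y => ⟨y.1, hA y.1 y.2⟩)
            (fun y z hyz => Subtype.ext (by simpa using congrArg Subtype.val hyz))
        omega
      · -- 8 pairwise disjoint 4-element orbits inside 28 points
        have hpair : ∀ d : ℕ, 0 < d → d < 7 → ¬ R K ((g' ^ d) γ) γ := by
          intro d hd0 hd7 hR
          have hiter : ∀ a : ℕ, R K ((g' ^ (a * d)) γ) γ := by
            intro a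
            induction a with
            | zero => simpa using R.refl γ
            | succ a ih =>
              have h1 : R K ((g' ^ (a*d)) ((g' ^ d) γ)) ((g' ^ (a*d)) γ) :=
                Rcompat _ (pow_mem hg'G _) _ _ hR
              have h2 := h1.trans ih
              have heq : (g' ^ ((a+1) * d)) γ = (g' ^ (a*d)) ((g' ^ d) γ) := by
                rw [← Equiv.Perm.mul_apply, ← pow_add]
                congr 2
                ring
              rwa [heq]
          have key : ∀ a t : ℕ, a * d = 7 * t + 1 → R K (g' γ) γ := by
            intro a t hat
            have hz := hiter a
            rw [hat] at hz
            have hpow : g' ^ (7 * t + 1) = g' := by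
              rw [pow_add, pow_mul, h7, one_pow, one_mul, pow_one]
            rwa [hpow] at hz
          have hgR : R K (g' γ) γ := by
            interval_cases d
            · exact key 1 0 (by norm_num)
            · exact key 4 1 (by norm_num)
            · exact key 5 2 (by norm_num)
            · exact key 2 1 (by norm_num)
            · exact key 3 2 (by norm_num)
            · exact key 6 5 (by norm_num)
          exact hrg hgR
        have hdistOrb : ∀ i j : ℕ, i < j → j < 7 → ¬ R K ((g' ^ j) γ) ((g' ^ i) γ) := by
          intro i j hij hj7 hR
          have h1 : R K ((g' ^ i)⁻¹ ((g' ^ j) γ)) ((g' ^ i)⁻¹ ((g' ^ i) γ)) :=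
            Rcompat _ (inv_mem (pow_mem hg'G _)) _ _ hR
          have h2 : (g' ^ i)⁻¹ ((g' ^ i) γ) = γ := (g' ^ i).symm_apply_apply _
          have h3 : (g' ^ i)⁻¹ ((g' ^ j) γ) = (g' ^ (j - i)) γ := by
            have hsp : (g' ^ j) γ = (g' ^ i) ((g' ^ (j-i)) γ) := by
              rw [← Equiv.Perm.mul_apply, ← pow_add]
              congr 2
              omega
            rw [hsp]; exact (g' ^ i).symm_apply_apply _
          rw [h2, h3] at h1
          exact hpair (j - i) (by omega) (by omega) h1
        have hnotα₁ : ∀ i : ℕ, i < 7 → ¬ R K ((g' ^ i) γ) α₁ := by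
          intro i hi7 hR
          have hfixi : g' ((g' ^ i) γ) = (g' ^ i) γ := Lfix α₁ hRα₁ _ hR
          have hcomm' : (g' ^ i) (g' γ) = g' ((g' ^ i) γ) := by
            rw [← Equiv.Perm.mul_apply, ← Equiv.Perm.mul_apply, ← pow_succ, ← pow_succ']
          have h5 : (g' ^ i) (g' γ) = (g' ^ i) γ := by rw [hcomm', hfixi]
          have h6 := (g' ^ i).injective h5
          exact hrg (by rw [h6]; exact R.refl γ)
        have horbcard : ∀ c : Ω, (orbit ↥K c).toFinset.card = 4 := by
          intro c
          rw [← Set.ncard_eq_toFinset_card', ← Nat.card_coe_set_eq, card_orb_all c, hs]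
        have hdisjF : ∀ a b : Ω, ¬ R K a b →
            Disjoint (orbit ↥K a).toFinset (orbit ↥K b).toFinset := by
          intro a b hab
          rw [Finset.disjoint_left]
          intro y hya hyb
          exact hab ((R.symm (Set.mem_toFinset.mp hya)).trans (Set.mem_toFinset.mp hyb))
        set B : ℕ → Finset Ω := fun i => (orbit ↥K ((g' ^ i) γ)).toFinset with hBdef
        have hpw : ∀ i ∈ Finset.range 7, ∀ j ∈ Finset.range 7, i ≠ j → Disjoint (B i) (B j) := by
          intro i hi j hj hij
          rcases Nat.lt_trichotomy i j with h | h | h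
          · exact (hdisjF _ _ (hdistOrb i j h (Finset.mem_range.mp hj))).symm
          · exact absurd h hij
          · exact hdisjF _ _ (hdistOrb j i h (Finset.mem_range.mp hi))
        have hcardU : ((Finset.range 7).biUnion B).card = 28 := by
          rw [Finset.card_biUnion hpw]
          have heach : ∀ i ∈ Finset.range 7, (B i).card = 4 := fun i _ => horbcard _
          rw [Finset.sum_const_nat heach, Finset.card_range]
        have hdisjC : Disjoint ((Finset.range 7).biUnion B) (orbit ↥K α₁).toFinset := by
          rw [Finset.disjoint_left]
          intro y hy hyC
          obtain ⟨i, hi, hyB⟩ := Finset.mem_biUnion.mp hy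
          exact (hnotα₁ i (Finset.mem_range.mp hi))
            ((R.symm (Set.mem_toFinset.mp hyB)).trans (Set.mem_toFinset.mp hyC))
        have htot := Finset.card_union_of_disjoint hdisjC
        have hle := Finset.card_le_univ (((Finset.range 7).biUnion B) ∪ (orbit ↥K α₁).toFinset)
        rw [htot, hcardU, horbcard α₁, hΩ28] at hle
        omega
    · -- h = 3 : Cauchy gives an element of order 2
      letI := Fintype.ofFinite ↥K
      haveI : Fact (Nat.Prime 2) := ⟨Nat.prime_two⟩
      have h12 : Fintype.card ↥K = 12 := by
        rw [← Nat.card_eq_fintype_card, ← hnKdef, hnK4, hhv]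
      obtain ⟨y, hy⟩ := exists_prime_orderOf_dvd_card 2 (by rw [h12]; norm_num)
      obtain ⟨z, hz⟩ := hno ↑y (hKG y.2)
      have hymem : y ∈ St K z := mem_St.mpr hz
      have hdvd3 : orderOf y ∣ Nat.card (St K z) := by
        have := orderOf_dvd_natCard (⟨y, hymem⟩ : ↥(St K z))
        simpa [Subgroup.orderOf_mk] using this
      rw [hStcard z, hhv, hy] at hdvd3
      norm_num at hdvd3
    · -- h = 4
      have hJ4 : ∀ a b : Ω, St K a ≠ St K b → St K a ⊔ St K b = ⊤ := by
        intro a b hne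
        have hinf' := hinfTriv (by omega) a b hne
        have hb' := hprodcard a b hinf'
        rw [hStcard a, hStcard b, hhv] at hb'
        apply Subgroup.eq_top_of_card_eq
        have hle : Nat.card ↥(St K a ⊔ St K b) ≤ nK :=
          Nat.le_of_dvd (by omega) (Subgroup.card_subgroup_dvd_card _)
        omega
      exact buildSigma G K hKG hcomm h2c hno hStR hnt hJ4

end Stmt18Aux

/-- a transitive 2-closed group of fixity `4` with a non-trivial
normal `p`-subgroup contains a fixed-point-free element. -/
theorem stmt_18 (G : Subgroup (Equiv.Perm Ω)) (htr : IsTransitive G)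
    (h2c : IsTwoClosed G) (hfix : HasFixity G 4) (p : ℕ) (hp : p.Prime)
    (N : Subgroup ↥G) (hNnormal : N.Normal) (hNbot : N ≠ ⊥) (hNp : IsPGroup p ↥N) :
    ∃ g ∈ G, ∀ x : Ω, g x ≠ x := by
  by_contra hcon
  push_neg at hcon
  -- K := image in Perm Ω of the center of N
  set Z : Subgroup ↥G := (Subgroup.center ↥N).map N.subtype with hZ
  set K : Subgroup (Equiv.Perm Ω) := Z.map G.subtype with hK
  have hKG : K ≤ G := Subgroup.map_subtype_le Z
  have hcomm : ∀ a ∈ K, ∀ b ∈ K, a * b = b * a := by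
    rintro a ha b hb
    obtain ⟨a', ha', rfl⟩ := ha
    obtain ⟨b', hb', rfl⟩ := hb
    obtain ⟨a'', ha'', rfl⟩ := ha'
    obtain ⟨b'', hb'', rfl⟩ := hb'
    have : a'' * b'' = b'' * a'' := (Subgroup.mem_center_iff.mp ha'' b'').symm
    have : N.subtype a'' * N.subtype b'' = N.subtype b'' * N.subtype a'' := by
      rw [← map_mul, ← map_mul, this]
    calc G.subtype (N.subtype a'') * G.subtype (N.subtype b'')
        = G.subtype (N.subtype a'' * N.subtype b'') := by rw [map_mul]
      _ = G.subtype (N.subtype b'' * N.subtype a'') := by rw [this]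
      _ = G.subtype (N.subtype b'') * G.subtype (N.subtype a'') := by rw [map_mul]
  have hKnt : ∃ k ∈ K, k ≠ 1 := by
    have hNnt : Nontrivial ↥N := N.nontrivial_iff_ne_bot.mpr hNbot
    haveI := Fact.mk hp
    have := hNp.center_nontrivial
    obtain ⟨z, hz⟩ := exists_ne (1 : ↥(Subgroup.center ↥N))
    refine ⟨G.subtype (N.subtype ↑z), ⟨N.subtype ↑z, ⟨↑z, z.2, rfl⟩, rfl⟩, ?_⟩
    intro h
    apply hz
    have h1 : N.subtype (↑z : ↥N) = 1 := Subgroup.subtype_injective G (by simpa using h)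
    have h2 : (↑z : ↥N) = 1 := Subgroup.subtype_injective N (by simpa using h1)
    exact Subtype.ext h2
  have hnorm : ∀ g ∈ G, ∀ k ∈ K, g * k * g⁻¹ ∈ K := by
    rintro g hg k hk
    obtain ⟨k', hk', rfl⟩ := hk
    obtain ⟨c, hc, rfl⟩ := hk'
    set gh : ↥G := ⟨g, hg⟩ with hgh
    have hnn : gh * N.subtype c * gh⁻¹ ∈ N := hNnormal.conj_mem (N.subtype c) c.2 gh
    have hcent : (⟨gh * N.subtype c * gh⁻¹, hnn⟩ : ↥N) ∈ Subgroup.center ↥N := by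
      rw [Subgroup.mem_center_iff]
      intro w
      have hw' : gh⁻¹ * N.subtype w * gh ∈ N := by
        simpa using hNnormal.conj_mem (N.subtype w) w.2 gh⁻¹
      have hcw := Subgroup.mem_center_iff.mp hc ⟨gh⁻¹ * N.subtype w * gh, hw'⟩
      have hcw' : (gh⁻¹ * N.subtype w * gh) * N.subtype c
          = N.subtype c * (gh⁻¹ * N.subtype w * gh) := congrArg N.subtype hcw
      apply Subtype.ext
      show N.subtype w * (gh * N.subtype c * gh⁻¹) = (gh * N.subtype c * gh⁻¹) * N.subtype w
      have key := congrArg (fun x : ↥G => gh * x * gh⁻¹) hcw'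
      simp only [mul_assoc] at key ⊢
      simpa [mul_assoc, inv_mul_cancel_left, mul_inv_cancel_left] using key
    refine ⟨gh * N.subtype c * gh⁻¹, ⟨⟨gh * N.subtype c * gh⁻¹, hnn⟩, hcent, rfl⟩, ?_⟩
    simp [hgh]
  exact Stmt18Aux.main G K hKG hcomm hnorm hKnt htr h2c hfix (fun g hg => hcon g hg)
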